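/- Let F : ℝ × [0,∞) → ℝ be C², H ∈ (0, 1/2], and let B^H_u be a centered Gaussian random variable with variance u^{2H} for each u (marginals of fBM). Assume F and its derivatives have polynomial growth. Then for 0 ≤ s ≤ t: E[F(B^H_t, t)] − E[F(B^H_s, s)] = ∫_s^t E[∂_u F(B^H_u, u)] du + (1/2) ∫_s^t E[∂_x² F(B^H_u, u)] d(u^{2H}), where d(u^{2H}) denotes integration against the increasing function u ↦ u^{2H} (i.e. the second integral is ∫_s^t E[∂_x²F(B^H_u,u)] · 2H u^{2H−1} du). -/

import Mathlib

open MeasureTheory ProbabilityTheory Real Filter Set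
open scoped NNReal ENNReal Topology

noncomputable section

local notation "γ" => gaussianReal 0 1

lemma gpdf_eq (x : ℝ) : gaussianPDFReal 0 1 x = (Real.sqrt (2 * Real.pi))⁻¹ * Real.exp (-(1/2) * x^2) := by
  rw [gaussianPDFReal]
  simp only [NNReal.coe_one, mul_one, sub_zero]
  congr 1
  ring

lemma integral_gaussianReal_eq (g : ℝ → ℝ) :
    ∫ x, g x ∂γ = ∫ x, gaussianPDFReal 0 1 x * g x := by
  rw [gaussianReal_of_var_ne_zero 0 one_ne_zero]
  have h1 : (gaussianPDF 0 1) = fun x => ((Real.toNNReal (gaussianPDFReal 0 1 x) : ℝ≥0) : ℝ≥0∞) := rfl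
  rw [h1, integral_withDensity_eq_integral_smul
    (measurable_gaussianPDFReal 0 1).real_toNNReal g]
  congr 1
  ext x
  simp [NNReal.smul_def, Real.coe_toNNReal _ (gaussianPDFReal_nonneg 0 1 x)]

lemma poly_exp_bound (m : ℕ) (x b : ℝ) (hb : 0 < b) :
    (1 + |x|)^m * Real.exp (-b * x^2) ≤ Real.exp ((m:ℝ)^2/(2*b)) * Real.exp (-(b/2) * x^2) := by
  have h1 : (1 + |x|)^m ≤ Real.exp ((m:ℝ) * |x|) := by
    calc (1 + |x|)^m ≤ (Real.exp |x|)^m := by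
          apply pow_le_pow_left₀ (by positivity)
          linarith [Real.add_one_le_exp |x|]
        _ = Real.exp ((m:ℝ) * |x|) := by rw [← Real.exp_nat_mul]
  have key : (m:ℝ)*|x| - b * x^2 ≤ (m:ℝ)^2/(2*b) - (b/2) * x^2 := by
    have h2 : 2*b*((m:ℝ)*|x| - b * x^2) ≤ 2*b*((m:ℝ)^2/(2*b) - (b/2) * x^2) := by
      have hrhs : 2*b*((m:ℝ)^2/(2*b) - (b/2) * x^2) = (m:ℝ)^2 - b^2*x^2 := by
        field_simp
      rw [hrhs]
      nlinarith [sq_nonneg ((m:ℝ) - b*|x|), sq_abs x]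
    exact le_of_mul_le_mul_left h2 (by positivity)
  calc (1 + |x|)^m * Real.exp (-b * x^2) ≤ Real.exp ((m:ℝ)*|x|) * Real.exp (-b * x^2) := by
        apply mul_le_mul_of_nonneg_right h1 (Real.exp_pos _).le
    _ = Real.exp ((m:ℝ)*|x| - b * x^2) := by rw [← Real.exp_add]; ring_nf
    _ ≤ Real.exp ((m:ℝ)^2/(2*b) - (b/2) * x^2) := Real.exp_le_exp.2 key
    _ = _ := by rw [← Real.exp_add]; ring_nf

lemma integrable_poly_gauss (m : ℕ) : Integrable (fun x => (1+|x|)^m) γ := by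
  rw [gaussianReal_of_var_ne_zero 0 one_ne_zero]
  have h1 : (gaussianPDF 0 1) = fun x => ((Real.toNNReal (gaussianPDFReal 0 1 x) : ℝ≥0) : ℝ≥0∞) := rfl
  rw [h1, integrable_withDensity_iff_integrable_smul
    (measurable_gaussianPDFReal 0 1).real_toNNReal]
  have hInt : Integrable (fun x : ℝ => ((Real.sqrt (2 * Real.pi))⁻¹ * Real.exp ((m:ℝ)^2/(2*(1/2)))) * Real.exp (-((1:ℝ)/4) * x^2)) volume :=
    (integrable_exp_neg_mul_sq (by norm_num)).const_mul _
  apply hInt.mono'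
  · apply AEStronglyMeasurable.smul
    · exact (measurable_gaussianPDFReal 0 1).real_toNNReal.coe_nnreal_real.aestronglyMeasurable
    · exact ((continuous_const.add continuous_abs).pow m).aestronglyMeasurable
  · filter_upwards with x
    have hnn : 0 ≤ gaussianPDFReal 0 1 x := gaussianPDFReal_nonneg 0 1 x
    rw [NNReal.smul_def, smul_eq_mul, Real.coe_toNNReal _ hnn, Real.norm_eq_abs, abs_mul,
      abs_of_nonneg hnn, abs_of_nonneg (by positivity)]
    rw [gpdf_eq]
    have h2 := poly_exp_bound m x (1/2) (by norm_num)
    calc (Real.sqrt (2 * Real.pi))⁻¹ * Real.exp (-(1/2) * x^2) * (1+|x|)^m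
        = (Real.sqrt (2 * Real.pi))⁻¹ * ((1+|x|)^m * Real.exp (-(1/2) * x^2)) := by ring
      _ ≤ (Real.sqrt (2 * Real.pi))⁻¹ * (Real.exp ((m:ℝ)^2/(2*(1/2))) * Real.exp (-((1:ℝ)/4) * x^2)) := by
          apply mul_le_mul_of_nonneg_left _ (by positivity)
          have h3 : -((1:ℝ)/4) = -(1/2/2) := by norm_num
          rw [h3]; exact h2
      _ = _ := by ring

lemma integrable_of_poly_bound {h : ℝ → ℝ} (hm : AEStronglyMeasurable h γ) {C : ℝ} {m : ℕ}
    (hb : ∀ x, |h x| ≤ C * (1+|x|)^m) : Integrable h γ := by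
  apply ((integrable_poly_gauss m).const_mul C).mono' hm
  filter_upwards with x
  rw [Real.norm_eq_abs]
  exact hb x


lemma poly_exp_half (m : ℕ) (x : ℝ) :
    (1+|x|)^m * Real.exp (-(1/2) * x^2) ≤ Real.exp ((m:ℝ)^2) * Real.exp (-(1/4) * x^2) := by
  have h := poly_exp_bound m x (1/2) (by norm_num)
  convert h using 4 <;> norm_num

lemma continuous_gpdf : Continuous (gaussianPDFReal 0 1) := by
  have : gaussianPDFReal 0 1 = fun x => (Real.sqrt (2 * Real.pi))⁻¹ * Real.exp (-(1/2) * x^2) := by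
    ext x; exact gpdf_eq x
  rw [this]
  continuity

lemma hasDerivAt_gpdf (x : ℝ) :
    HasDerivAt (gaussianPDFReal 0 1) (-x * gaussianPDFReal 0 1 x) x := by
  have h : ∀ y : ℝ, gaussianPDFReal 0 1 y = (Real.sqrt (2 * Real.pi))⁻¹ * Real.exp (-(1/2) * y^2) :=
    gpdf_eq
  rw [funext h]
  simp only []
  rw [show -x * ((√(2 * Real.pi))⁻¹ * Real.exp (-(1/2) * x^2)) = -x * gaussianPDFReal 0 1 x from by rw [gpdf_eq]]
  rw [gpdf_eq]
  have h1 : HasDerivAt (fun y : ℝ => -(1/2) * y^2) (-x) x := by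
    simpa using ((hasDerivAt_pow 2 x).const_mul (-(1/2) : ℝ))
  have h2 := (h1.exp).const_mul ((Real.sqrt (2 * Real.pi))⁻¹)
  exact h2.congr_deriv (by ring)

lemma integrable_pdf_mul {g : ℝ → ℝ} (hg : AEStronglyMeasurable g (volume : Measure ℝ))
    {C : ℝ} {m : ℕ} (hb : ∀ x, |g x| ≤ C * (1+|x|)^m) :
    Integrable (fun x => gaussianPDFReal 0 1 x * g x) (volume : Measure ℝ) := by
  have hC : 0 ≤ C := by
    have := hb 0; have h0 : (0:ℝ) ≤ |g 0| := abs_nonneg _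
    simp at this; nlinarith
  have hInt : Integrable (fun x : ℝ => ((Real.sqrt (2 * Real.pi))⁻¹ * C * Real.exp ((m:ℝ)^2)) * Real.exp (-(1/4 : ℝ) * x^2)) volume :=
    (integrable_exp_neg_mul_sq (by norm_num)).const_mul _
  apply hInt.mono' (continuous_gpdf.aestronglyMeasurable.mul hg)
  filter_upwards with x
  have hnn : 0 ≤ gaussianPDFReal 0 1 x := gaussianPDFReal_nonneg 0 1 x
  show ‖gaussianPDFReal 0 1 x * g x‖ ≤ _
  rw [Real.norm_eq_abs, abs_mul, abs_of_nonneg hnn, gpdf_eq]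
  calc (Real.sqrt (2 * Real.pi))⁻¹ * Real.exp (-(1/2) * x^2) * |g x|
      ≤ (Real.sqrt (2 * Real.pi))⁻¹ * Real.exp (-(1/2) * x^2) * (C * (1+|x|)^m) := by
        apply mul_le_mul_of_nonneg_left (hb x) (by positivity)
    _ = (Real.sqrt (2 * Real.pi))⁻¹ * C * ((1+|x|)^m * Real.exp (-(1/2) * x^2)) := by ring
    _ ≤ (Real.sqrt (2 * Real.pi))⁻¹ * C * (Real.exp ((m:ℝ)^2) * Real.exp (-(1/4) * x^2)) := by
        apply mul_le_mul_of_nonneg_left (poly_exp_half m x) (by positivity)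
    _ = _ := by ring

lemma tendsto_pdf_mul {g : ℝ → ℝ} {C : ℝ} {m : ℕ} (hC : 0 ≤ C)
    (hb : ∀ x, |g x| ≤ C * (1+|x|)^m) (l : Filter ℝ)
    (hl : Tendsto (fun x : ℝ => x^2) l atTop) :
    Tendsto (fun x => gaussianPDFReal 0 1 x * g x) l (𝓝 0) := by
  have hexp : Tendsto (fun x : ℝ => Real.exp (-(1/4) * x^2)) l (𝓝 0) := by
    apply Real.tendsto_exp_atBot.comp
    have h1 : Tendsto (fun x : ℝ => (1/4 : ℝ) * x^2) l atTop :=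
      hl.const_mul_atTop (by norm_num)
    have := tendsto_neg_atBot_iff.2 h1
    simpa [neg_mul] using this
  have hB : Tendsto (fun x : ℝ => ((Real.sqrt (2 * Real.pi))⁻¹ * C * Real.exp ((m:ℝ)^2)) * Real.exp (-(1/4 : ℝ) * x^2)) l (𝓝 0) := by
    simpa using hexp.const_mul ((Real.sqrt (2 * Real.pi))⁻¹ * C * Real.exp ((m:ℝ)^2))
  apply squeeze_zero_norm _ hB
  intro x
  have hnn : 0 ≤ gaussianPDFReal 0 1 x := gaussianPDFReal_nonneg 0 1 x
  rw [Real.norm_eq_abs, abs_mul, abs_of_nonneg hnn, gpdf_eq]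
  calc (Real.sqrt (2 * Real.pi))⁻¹ * Real.exp (-(1/2) * x^2) * |g x|
      ≤ (Real.sqrt (2 * Real.pi))⁻¹ * Real.exp (-(1/2) * x^2) * (C * (1+|x|)^m) := by
        apply mul_le_mul_of_nonneg_left (hb x) (by positivity)
    _ = (Real.sqrt (2 * Real.pi))⁻¹ * C * ((1+|x|)^m * Real.exp (-(1/2) * x^2)) := by ring
    _ ≤ (Real.sqrt (2 * Real.pi))⁻¹ * C * (Real.exp ((m:ℝ)^2) * Real.exp (-(1/4) * x^2)) := by
        apply mul_le_mul_of_nonneg_left (poly_exp_half m x) (by positivity)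
    _ = _ := by ring

lemma gaussian_ibp {h h' : ℝ → ℝ} (hd : ∀ x, HasDerivAt h (h' x) x) (hc : Continuous h')
    {C : ℝ} {m : ℕ} (hb : ∀ x, |h x| ≤ C * (1+|x|)^m) (hb' : ∀ x, |h' x| ≤ C * (1+|x|)^m) :
    ∫ x, x * h x ∂γ = ∫ x, h' x ∂γ := by
  have hC : 0 ≤ C := by
    have := hb 0; have h0 : (0:ℝ) ≤ |h 0| := abs_nonneg _
    simp at this; nlinarith
  have hcont_h : Continuous h := by
    have : Differentiable ℝ h := fun x => (hd x).differentiableAt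
    exact this.continuous
  set φ : ℝ → ℝ := gaussianPDFReal 0 1 with hφ
  have hGd : ∀ x, HasDerivAt (fun y => φ y * h y)
      (φ x * h' x - φ x * (x * h x)) x := by
    intro x
    have := (hasDerivAt_gpdf x).mul (hd x)
    exact this.congr_deriv (by ring)
  have hG'int : Integrable (fun x => φ x * h' x - φ x * (x * h x)) (volume : Measure ℝ) := by
    have hI1 : Integrable (fun x => φ x * h' x) (volume : Measure ℝ) :=
      integrable_pdf_mul hc.aestronglyMeasurable hb'
    have hI2 : Integrable (fun x => φ x * (x * h x)) (volume : Measure ℝ) := by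
      apply integrable_pdf_mul (continuous_id.mul hcont_h).aestronglyMeasurable
        (C := C) (m := m+1)
      intro x
      show |x * h x| ≤ _
      rw [abs_mul]
      calc |x| * |h x| ≤ (1+|x|) * (C * (1+|x|)^m) := by
            apply mul_le_mul (by linarith [abs_nonneg x]) (hb x) (abs_nonneg _) (by positivity)
        _ = C * (1+|x|)^(m+1) := by ring
    exact hI1.sub hI2
  have htop : Tendsto (fun x => φ x * h x) atTop (𝓝 0) := by
    apply tendsto_pdf_mul hC hb
    exact (tendsto_pow_atTop (two_ne_zero)).comp tendsto_id
  have hbot : Tendsto (fun x => φ x * h x) atBot (𝓝 0) := by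
    apply tendsto_pdf_mul hC hb
    have h1 : Tendsto (fun x : ℝ => |x|^2) atBot atTop :=
      (tendsto_pow_atTop (two_ne_zero)).comp tendsto_abs_atBot_atTop
    simpa [sq_abs] using h1
  have hIic : ∫ x in Iic (0:ℝ), (φ x * h' x - φ x * (x * h x)) =
      (φ 0 * h 0) - 0 :=
    integral_Iic_of_hasDerivAt_of_tendsto' (fun x _ => hGd x) hG'int.integrableOn hbot
  have hIoi : ∫ x in Ioi (0:ℝ), (φ x * h' x - φ x * (x * h x)) =
      0 - (φ 0 * h 0) :=
    integral_Ioi_of_hasDerivAt_of_tendsto' (fun x _ => hGd x) hG'int.integrableOn htop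
  have hzero : ∫ x, (φ x * h' x - φ x * (x * h x)) = 0 := by
    rw [← intervalIntegral.integral_Iic_add_Ioi hG'int.integrableOn hG'int.integrableOn, hIic, hIoi]
    ring
  have hI1 : Integrable (fun x => φ x * h' x) (volume : Measure ℝ) :=
    integrable_pdf_mul hc.aestronglyMeasurable hb'
  have hI2 : Integrable (fun x => φ x * (x * h x)) (volume : Measure ℝ) := by
    apply integrable_pdf_mul (continuous_id.mul hcont_h).aestronglyMeasurable
      (C := C) (m := m+1)
    intro x
    show |x * h x| ≤ _
    rw [abs_mul]
    calc |x| * |h x| ≤ (1+|x|) * (C * (1+|x|)^m) := by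
          apply mul_le_mul (by linarith [abs_nonneg x]) (hb x) (abs_nonneg _) (by positivity)
      _ = C * (1+|x|)^(m+1) := by ring
  rw [integral_sub hI1 hI2] at hzero
  rw [integral_gaussianReal_eq (fun x => x * h x), integral_gaussianReal_eq h']
  linarith


def pFx (F : ℝ → ℝ → ℝ) (x t : ℝ) : ℝ := deriv (fun z => F z t) x
def pFt (F : ℝ → ℝ → ℝ) (x t : ℝ) : ℝ := deriv (fun v => F x v) t
def pFxx (F : ℝ → ℝ → ℝ) (x t : ℝ) : ℝ := deriv (fun y => pFx F y t) x

section partials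

variable {F : ℝ → ℝ → ℝ} (hF : ContDiff ℝ 2 (fun p : ℝ × ℝ => F p.1 p.2))
include hF

lemma hasDerivAt_pFx (x t : ℝ) :
    HasDerivAt (fun z => F z t) (fderiv ℝ (fun p : ℝ × ℝ => F p.1 p.2) (x,t) (1,0)) x := by
  have h1 : HasDerivAt (fun z : ℝ => ((z, t) : ℝ × ℝ)) ((1:ℝ), (0:ℝ)) x :=
    (hasDerivAt_id x).prodMk (hasDerivAt_const x t)
  exact ((hF.differentiable two_ne_zero (x,t)).hasFDerivAt).comp_hasDerivAt x h1

lemma pFx_eq (x t : ℝ) : pFx F x t = fderiv ℝ (fun p : ℝ × ℝ => F p.1 p.2) (x,t) (1,0) :=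
  (hasDerivAt_pFx hF x t).deriv

lemma hasDerivAt_pFt (x t : ℝ) :
    HasDerivAt (fun v => F x v) (fderiv ℝ (fun p : ℝ × ℝ => F p.1 p.2) (x,t) (0,1)) t := by
  have h1 : HasDerivAt (fun v : ℝ => ((x, v) : ℝ × ℝ)) ((0:ℝ), (1:ℝ)) t :=
    (hasDerivAt_const t x).prodMk (hasDerivAt_id t)
  exact ((hF.differentiable two_ne_zero (x,t)).hasFDerivAt).comp_hasDerivAt t h1

lemma pFt_eq (x t : ℝ) : pFt F x t = fderiv ℝ (fun p : ℝ × ℝ => F p.1 p.2) (x,t) (0,1) :=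
  (hasDerivAt_pFt hF x t).deriv

lemma cont_pFx : Continuous (fun p : ℝ × ℝ => pFx F p.1 p.2) := by
  have hLc : Continuous (fderiv ℝ (fun p : ℝ × ℝ => F p.1 p.2)) :=
    hF.continuous_fderiv two_ne_zero
  have : Continuous (fun p : ℝ × ℝ => fderiv ℝ (fun p : ℝ × ℝ => F p.1 p.2) p ((1:ℝ),(0:ℝ))) :=
    hLc.clm_apply continuous_const
  convert this using 2 with p
  exact pFx_eq hF p.1 p.2

lemma cont_pFt : Continuous (fun p : ℝ × ℝ => pFt F p.1 p.2) := by
  have hLc : Continuous (fderiv ℝ (fun p : ℝ × ℝ => F p.1 p.2)) :=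
    hF.continuous_fderiv two_ne_zero
  have : Continuous (fun p : ℝ × ℝ => fderiv ℝ (fun p : ℝ × ℝ => F p.1 p.2) p ((0:ℝ),(1:ℝ))) :=
    hLc.clm_apply continuous_const
  convert this using 2 with p
  exact pFt_eq hF p.1 p.2

lemma hasDerivAt_comp_curve {c : ℝ → ℝ} {c' u : ℝ} (hc : HasDerivAt c c' u) :
    HasDerivAt (fun v => F (c v) v) (pFx F (c u) u * c' + pFt F (c u) u) u := by
  have h1 : HasDerivAt (fun v : ℝ => ((c v, v) : ℝ × ℝ)) ((c', (1:ℝ))) u :=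
    hc.prodMk (hasDerivAt_id u)
  have h2 : HasDerivAt (fun v => F (c v) v)
      (fderiv ℝ (fun p : ℝ × ℝ => F p.1 p.2) (c u, u) ((c', (1:ℝ)))) u :=
    HasFDerivAt.comp_hasDerivAt (f := fun v : ℝ => ((c v, v) : ℝ × ℝ)) u
      ((hF.differentiable two_ne_zero (c u, u)).hasFDerivAt) h1
  refine h2.congr_deriv ?_
  have hdecomp : ((c', (1:ℝ)) : ℝ × ℝ) = c' • ((1:ℝ),(0:ℝ)) + ((0:ℝ),(1:ℝ)) := by
    simp [Prod.ext_iff]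
  rw [pFx_eq hF, pFt_eq hF, hdecomp, ContinuousLinearMap.map_add,
    ContinuousLinearMap.map_smul]
  simp [smul_eq_mul]
  ring

-- C¹ smoothness of the joint Fx
lemma contDiff_pFx : ContDiff ℝ 1 (fun p : ℝ × ℝ => pFx F p.1 p.2) := by
  have h1 : ContDiff ℝ 1 (fderiv ℝ (fun p : ℝ × ℝ => F p.1 p.2)) :=
    hF.fderiv_right (by norm_num)
  have h2 : ContDiff ℝ 1 (fun p : ℝ × ℝ =>
      fderiv ℝ (fun p : ℝ × ℝ => F p.1 p.2) p ((1:ℝ),(0:ℝ))) :=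
    h1.clm_apply contDiff_const
  convert h2 using 2 with p
  exact pFx_eq hF p.1 p.2

lemma hasDerivAt_pFx_x (x t : ℝ) :
    HasDerivAt (fun y => pFx F y t) (pFxx F x t) x := by
  have h1 : HasDerivAt (fun z : ℝ => ((z, t) : ℝ × ℝ)) ((1:ℝ), (0:ℝ)) x :=
    (hasDerivAt_id x).prodMk (hasDerivAt_const x t)
  have h2 := (((contDiff_pFx hF).differentiable one_ne_zero (x,t)).hasFDerivAt).comp_hasDerivAt x h1
  have h3 : pFxx F x t = fderiv ℝ (fun p : ℝ × ℝ => pFx F p.1 p.2) (x,t) (1,0) := h2.deriv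
  rw [h3]
  exact h2

lemma cont_pFxx : Continuous (fun p : ℝ × ℝ => pFxx F p.1 p.2) := by
  have hLc : Continuous (fderiv ℝ (fun p : ℝ × ℝ => pFx F p.1 p.2)) :=
    (contDiff_pFx hF).continuous_fderiv one_ne_zero
  have h2 : Continuous (fun p : ℝ × ℝ =>
      fderiv ℝ (fun p : ℝ × ℝ => pFx F p.1 p.2) p ((1:ℝ),(0:ℝ))) :=
    hLc.clm_apply continuous_const
  convert h2 using 2 with p
  exact (by
    have h1 : HasDerivAt (fun z : ℝ => ((z, p.2) : ℝ × ℝ)) ((1:ℝ), (0:ℝ)) p.1 :=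
      (hasDerivAt_id p.1).prodMk (hasDerivAt_const p.1 p.2)
    exact ((((contDiff_pFx hF).differentiable one_ne_zero (p.1,p.2)).hasFDerivAt).comp_hasDerivAt p.1 h1).deriv :
    pFxx F p.1 p.2 = fderiv ℝ (fun p : ℝ × ℝ => pFx F p.1 p.2) (p.1,p.2) (1,0))


lemma pFx_growth {C : ℝ} {n : ℕ} {T : ℝ} (hT : 0 < T)
    (hbxx : ∀ x t : ℝ, t ∈ Icc (0:ℝ) T → |pFxx F x t| ≤ C * (1+|x|)^n) :
    ∃ C₂ : ℝ, 0 ≤ C₂ ∧ ∀ x t : ℝ, t ∈ Icc (0:ℝ) T → |pFx F x t| ≤ C₂ * (1+|x|)^(n+1) := by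
  have hC : 0 ≤ C := by
    have := hbxx 0 0 ⟨le_refl 0, hT.le⟩
    have h0 : (0:ℝ) ≤ |pFxx F 0 0| := abs_nonneg _
    simp at this; nlinarith
  -- bound for pFx F 0 t on the compact [0,T]
  obtain ⟨M, hM⟩ : ∃ M, ∀ t ∈ Icc (0:ℝ) T, ‖pFx F 0 t‖ ≤ M := by
    apply (isCompact_Icc : IsCompact (Icc (0:ℝ) T)).exists_bound_of_continuousOn
    have := (cont_pFx hF).comp (continuous_const.prodMk continuous_id : Continuous (fun t : ℝ => ((0:ℝ), t)))
    exact this.continuousOn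
  refine ⟨max M 0 + C, by positivity, fun x t ht => ?_⟩
  have hFTC : pFx F x t - pFx F 0 t = ∫ y in (0:ℝ)..x, pFxx F y t := by
    rw [intervalIntegral.integral_eq_sub_of_hasDerivAt
      (fun y _ => hasDerivAt_pFx_x hF y t) ?_]
    · apply Continuous.intervalIntegrable
      exact (cont_pFxx hF).comp (continuous_id.prodMk continuous_const)
  have hInt : ‖∫ y in (0:ℝ)..x, pFxx F y t‖ ≤ C * (1+|x|)^n * |x - 0| := by
    apply intervalIntegral.norm_integral_le_of_norm_le_const
    intro y hy
    have hyx : |y| ≤ |x| := by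
      rcases Set.mem_uIoc.1 hy with h | h
      · rw [abs_of_pos h.1, abs_of_nonneg (h.1.le.trans h.2)]; exact h.2
      · rw [abs_of_nonpos h.2, abs_of_neg (h.1.trans_le h.2)]; linarith [h.1]
    calc ‖pFxx F y t‖ ≤ C * (1+|y|)^n := hbxx y t ht
      _ ≤ C * (1+|x|)^n := by
          apply mul_le_mul_of_nonneg_left _ hC
          exact pow_le_pow_left₀ (by positivity) (by linarith) n
  have h1 : |pFx F x t| ≤ |pFx F 0 t| + C * (1+|x|)^n * |x| := by
    have heq : pFx F x t = pFx F 0 t + (pFx F x t - pFx F 0 t) := by ring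
    rw [heq]
    refine (abs_add_le _ _).trans ?_
    rw [hFTC]
    simp only [sub_zero] at hInt
    rw [Real.norm_eq_abs] at hInt
    exact (add_le_add_iff_left _).2 hInt
  calc |pFx F x t| ≤ |pFx F 0 t| + C * (1+|x|)^n * |x| := h1
    _ ≤ max M 0 * (1+|x|)^(n+1) + C * (1+|x|)^(n+1) := by
        apply add_le_add
        · calc |pFx F 0 t| ≤ M := hM t ht
            _ ≤ max M 0 := le_max_left _ _
            _ = max M 0 * 1 := (mul_one _).symm
            _ ≤ max M 0 * (1+|x|)^(n+1) := by
                apply mul_le_mul_of_nonneg_left _ (le_max_right M 0)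
                exact one_le_pow₀ (by linarith [abs_nonneg x])
        · have h2 : (1+|x|)^(n+1) = (1+|x|)^n * (1+|x|) := pow_succ _ _
          rw [h2]
          nlinarith [pow_nonneg (by positivity : (0:ℝ) ≤ 1+|x|) n, hC, abs_nonneg x]
    _ = (max M 0 + C) * (1+|x|)^(n+1) := by ring


end partials

set_option maxHeartbeats 2000000 in
theorem gaussian_time_marginal_ito_formula
    (H T : ℝ) (hH : H ∈ Set.Ioc (0:ℝ) (1/2)) (hT : 0 < T)
    (F : ℝ → ℝ → ℝ)
    (hF : ContDiff ℝ 2 (fun p : ℝ × ℝ => F p.1 p.2))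
    -- polynomial growth of F and of its derivatives used below
    (hgrowth : ∃ C : ℝ, ∃ n : ℕ, ∀ x t : ℝ, t ∈ Set.Icc 0 T →
      |F x t| ≤ C * (1 + |x|) ^ n ∧
      |deriv (fun u => F x u) t| ≤ C * (1 + |x|) ^ n ∧
      |deriv (fun y => deriv (fun z => F z t) y) x| ≤ C * (1 + |x|) ^ n) :
    ∀ s t : ℝ, 0 ≤ s → s ≤ t → t ≤ T →
      (∫ x, F (t ^ H * x) t ∂(gaussianReal 0 1))
        - (∫ x, F (s ^ H * x) s ∂(gaussianReal 0 1))
      = (∫ u in s..t, ∫ x, deriv (fun v => F (u ^ H * x) v) u ∂(gaussianReal 0 1))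
        + (1/2) * ∫ u in s..t,
            (∫ x, deriv (fun y => deriv (fun z => F z u) y) (u ^ H * x)
              ∂(gaussianReal 0 1)) * (2 * H * u ^ (2*H - 1)) := by
  obtain ⟨hH0, hH2⟩ := hH
  intro s t hs hst htT
  obtain ⟨C, n, hg⟩ := hgrowth
  suffices hmain : (∫ x, F (t^H*x) t ∂(gaussianReal 0 1))
        - (∫ x, F (s^H*x) s ∂(gaussianReal 0 1))
      = (∫ u in s..t, ∫ x, pFt F (u^H*x) u ∂(gaussianReal 0 1))
        + (1/2) * ∫ u in s..t,
            (∫ x, pFxx F (u^H*x) u ∂(gaussianReal 0 1)) * (2*H*u^(2*H-1)) by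
    simpa only [pFt, pFxx, pFx] using hmain
  have hgF : ∀ x u : ℝ, u ∈ Icc (0:ℝ) T → |F x u| ≤ C * (1+|x|)^n :=
    fun x u hu => (hg x u hu).1
  have hgFt : ∀ x u : ℝ, u ∈ Icc (0:ℝ) T → |pFt F x u| ≤ C * (1+|x|)^n :=
    fun x u hu => (hg x u hu).2.1
  have hgFxx : ∀ x u : ℝ, u ∈ Icc (0:ℝ) T → |pFxx F x u| ≤ C * (1+|x|)^n :=
    fun x u hu => (hg x u hu).2.2
  have hC : 0 ≤ C := by
    have := hgF 0 0 ⟨le_refl 0, hT.le⟩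
    have h0 : (0:ℝ) ≤ |F 0 0| := abs_nonneg _
    simp at this; nlinarith
  obtain ⟨C₂, hC₂, hgFx⟩ := pFx_growth hF hT hgFxx
  -- basic continuity facts
  have hFc : Continuous (fun p : ℝ × ℝ => F p.1 p.2) := hF.continuous
  have hFtc := cont_pFt hF
  have hFxc := cont_pFx hF
  have hFxxc := cont_pFxx hF
  have hPc : Continuous (fun v : ℝ => v ^ H) :=
    Real.continuous_rpow_const hH0.le
  have hsub : Icc s t ⊆ Icc (0:ℝ) T := fun u hu => ⟨hs.trans hu.1, hu.2.trans htT⟩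
  have hTH : 0 ≤ T ^ H := Real.rpow_nonneg hT.le H
  -- scaling bound
  have hscale : ∀ u ∈ Icc (0:ℝ) T, ∀ x : ℝ, ∀ m : ℕ,
      (1+|u^H*x|)^m ≤ (1+T^H)^m * (1+|x|)^m := by
    intro u hu x m
    have h1 : |u^H*x| = u^H * |x| := by
      rw [abs_mul, abs_of_nonneg (Real.rpow_nonneg hu.1 H)]
    have h2 : u^H ≤ T^H := Real.rpow_le_rpow hu.1 hu.2 hH0.le
    have h3 : (1:ℝ)+|u^H*x| ≤ (1+T^H) * (1+|x|) := by
      rw [h1]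
      have := abs_nonneg x
      nlinarith
    calc (1+|u^H*x|)^m ≤ ((1+T^H)*(1+|x|))^m :=
          pow_le_pow_left₀ (by positivity) h3 m
      _ = (1+T^H)^m * (1+|x|)^m := mul_pow _ _ _
  set K0 : ℝ := C * (1+T^H)^n with hK0
  have hK0nn : 0 ≤ K0 := by positivity
  set K2 : ℝ := C₂ * (1+T^H)^(n+1) with hK2
  have hK2nn : 0 ≤ K2 := by positivity
  have hbF : ∀ u ∈ Icc (0:ℝ) T, ∀ x : ℝ, |F (u^H*x) u| ≤ K0 * (1+|x|)^n := by
    intro u hu x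
    calc |F (u^H*x) u| ≤ C * (1+|u^H*x|)^n := hgF _ u hu
      _ ≤ C * ((1+T^H)^n * (1+|x|)^n) :=
          mul_le_mul_of_nonneg_left (hscale u hu x n) hC
      _ = K0 * (1+|x|)^n := by rw [hK0]; ring
  have hbFt : ∀ u ∈ Icc (0:ℝ) T, ∀ x : ℝ, |pFt F (u^H*x) u| ≤ K0 * (1+|x|)^n := by
    intro u hu x
    calc |pFt F (u^H*x) u| ≤ C * (1+|u^H*x|)^n := hgFt _ u hu
      _ ≤ C * ((1+T^H)^n * (1+|x|)^n) :=
          mul_le_mul_of_nonneg_left (hscale u hu x n) hC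
      _ = K0 * (1+|x|)^n := by rw [hK0]; ring
  have hbFxx : ∀ u ∈ Icc (0:ℝ) T, ∀ x : ℝ, |pFxx F (u^H*x) u| ≤ K0 * (1+|x|)^n := by
    intro u hu x
    calc |pFxx F (u^H*x) u| ≤ C * (1+|u^H*x|)^n := hgFxx _ u hu
      _ ≤ C * ((1+T^H)^n * (1+|x|)^n) :=
          mul_le_mul_of_nonneg_left (hscale u hu x n) hC
      _ = K0 * (1+|x|)^n := by rw [hK0]; ring
  have hbFx : ∀ u ∈ Icc (0:ℝ) T, ∀ x : ℝ, |pFx F (u^H*x) u| ≤ K2 * (1+|x|)^(n+1) := by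
    intro u hu x
    calc |pFx F (u^H*x) u| ≤ C₂ * (1+|u^H*x|)^(n+1) := hgFx _ u hu
      _ ≤ C₂ * ((1+T^H)^(n+1) * (1+|x|)^(n+1)) :=
          mul_le_mul_of_nonneg_left (hscale u hu x (n+1)) hC₂
      _ = K2 * (1+|x|)^(n+1) := by rw [hK2]; ring
  -- continuity of integrand families
  have hcont_int_F : ∀ x : ℝ, Continuous (fun u : ℝ => F (u^H*x) u) := fun x =>
    hFc.comp (((hPc.mul continuous_const).prodMk continuous_id))
  have hcont_int_Ft : ∀ x : ℝ, Continuous (fun u : ℝ => pFt F (u^H*x) u) := fun x =>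
    hFtc.comp (((hPc.mul continuous_const).prodMk continuous_id))
  have hcont_int_Fxx : ∀ x : ℝ, Continuous (fun u : ℝ => pFxx F (u^H*x) u) := fun x =>
    hFxxc.comp (((hPc.mul continuous_const).prodMk continuous_id))
  have hcont_x_F : ∀ u : ℝ, Continuous (fun x : ℝ => F (u^H*x) u) := fun u =>
    hFc.comp (((continuous_const.mul continuous_id).prodMk continuous_const))
  have hcont_x_Ft : ∀ u : ℝ, Continuous (fun x : ℝ => pFt F (u^H*x) u) := fun u =>
    hFtc.comp (((continuous_const.mul continuous_id).prodMk continuous_const))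
  have hcont_x_Fx : ∀ u : ℝ, Continuous (fun x : ℝ => pFx F (u^H*x) u) := fun u =>
    hFxc.comp (((continuous_const.mul continuous_id).prodMk continuous_const))
  have hcont_x_Fxx : ∀ u : ℝ, Continuous (fun x : ℝ => pFxx F (u^H*x) u) := fun u =>
    hFxxc.comp (((continuous_const.mul continuous_id).prodMk continuous_const))
  -- continuity of the three u-functions
  have hgcont : ContinuousOn (fun u => ∫ x, F (u^H*x) u ∂(gaussianReal 0 1)) (Icc s t) := by
    apply continuousOn_of_dominated (bound := fun x => K0 * (1+|x|)^n)
    · exact fun u _ => (hcont_x_F u).aestronglyMeasurable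
    · intro u hu
      filter_upwards with x
      rw [Real.norm_eq_abs]
      exact hbF u (hsub hu) x
    · exact (integrable_poly_gauss n).const_mul K0
    · filter_upwards with x
      exact (hcont_int_F x).continuousOn
  have hAcont : ContinuousOn (fun u => ∫ x, pFt F (u^H*x) u ∂(gaussianReal 0 1)) (Icc s t) := by
    apply continuousOn_of_dominated (bound := fun x => K0 * (1+|x|)^n)
    · exact fun u _ => (hcont_x_Ft u).aestronglyMeasurable
    · intro u hu
      filter_upwards with x
      rw [Real.norm_eq_abs]
      exact hbFt u (hsub hu) x
    · exact (integrable_poly_gauss n).const_mul K0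
    · filter_upwards with x
      exact (hcont_int_Ft x).continuousOn
  have hBcont : ContinuousOn (fun u => ∫ x, pFxx F (u^H*x) u ∂(gaussianReal 0 1)) (Icc s t) := by
    apply continuousOn_of_dominated (bound := fun x => K0 * (1+|x|)^n)
    · exact fun u _ => (hcont_x_Fxx u).aestronglyMeasurable
    · intro u hu
      filter_upwards with x
      rw [Real.norm_eq_abs]
      exact hbFxx u (hsub hu) x
    · exact (integrable_poly_gauss n).const_mul K0
    · filter_upwards with x
      exact (hcont_int_Fxx x).continuousOn
  -- the derivative of g on the open interval
  have hgderiv : ∀ u ∈ Ioo s t,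
      HasDerivAt (fun v => ∫ x, F (v^H*x) v ∂(gaussianReal 0 1))
        ((∫ x, pFt F (u^H*x) u ∂(gaussianReal 0 1))
          + H * u^(2*H-1) * (∫ x, pFxx F (u^H*x) u ∂(gaussianReal 0 1))) u := by
    intro u₀ hu₀
    have hu₀0 : 0 < u₀ := lt_of_le_of_lt hs hu₀.1
    have hu₀T : u₀ < T := lt_of_lt_of_le hu₀.2 htT
    set a : ℝ := u₀/2 with ha
    have ha0 : 0 < a := by positivity
    set ε : ℝ := min (u₀/2) ((T - u₀)/2) with hε
    have hεpos : 0 < ε := lt_min (by positivity) (by linarith)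
    have hball : ∀ v ∈ Metric.ball u₀ ε, a ≤ v ∧ v ∈ Icc (0:ℝ) T ∧ 0 < v := by
      intro v hv
      rw [Metric.mem_ball, Real.dist_eq, abs_lt] at hv
      have h1 : ε ≤ u₀/2 := min_le_left _ _
      have h2 : ε ≤ (T - u₀)/2 := min_le_right _ _
      refine ⟨by simp only [ha]; linarith, ⟨by linarith, by linarith⟩, by linarith⟩
    have haH : 0 ≤ H * a^(H-1) := by positivity
    set Kb : ℝ := K2 * (H * a^(H-1)) + K0 with hKb
    have hder := hasDerivAt_integral_of_dominated_loc_of_deriv_le (μ := gaussianReal 0 1)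
      (F := fun v x => F (v^H*x) v)
      (F' := fun v x => pFx F (v^H*x) v * (H * v^(H-1) * x) + pFt F (v^H*x) v)
      (x₀ := u₀) (bound := fun x => Kb * (1+|x|)^(n+2)) (Metric.ball_mem_nhds u₀ hεpos)
      (Eventually.of_forall (fun v => (hcont_x_F v).aestronglyMeasurable))
      (integrable_of_poly_bound (hcont_x_F u₀).aestronglyMeasurable
        (fun x => hbF u₀ ⟨hu₀0.le, hu₀T.le⟩ x))
      ?_ ?_ ?_ ?_
    · -- use the conclusion
      obtain ⟨-, hD⟩ := hder
      have hsplit : (∫ x, (pFx F (u₀^H*x) u₀ * (H * u₀^(H-1) * x) + pFt F (u₀^H*x) u₀)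
            ∂(gaussianReal 0 1))
          = (∫ x, pFt F (u₀^H*x) u₀ ∂(gaussianReal 0 1))
            + H * u₀^(2*H-1) * (∫ x, pFxx F (u₀^H*x) u₀ ∂(gaussianReal 0 1)) := by
        have hf1 : Integrable (fun x => pFx F (u₀^H*x) u₀ * (H * u₀^(H-1) * x))
            (gaussianReal 0 1) := by
          apply integrable_of_poly_bound (C := K2 * (H * u₀^(H-1))) (m := n+2)
          · exact ((hcont_x_Fx u₀).mul (continuous_const.mul continuous_id)).aestronglyMeasurable
          · intro x
            have h1 : 0 ≤ H * u₀^(H-1) := by positivity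
            rw [abs_mul]
            calc |pFx F (u₀^H*x) u₀| * |H * u₀^(H-1) * x|
                ≤ (K2 * (1+|x|)^(n+1)) * (H * u₀^(H-1) * (1+|x|)) := by
                  apply mul_le_mul (hbFx u₀ ⟨hu₀0.le, hu₀T.le⟩ x) _ (abs_nonneg _) (by positivity)
                  rw [abs_mul, abs_of_nonneg h1]
                  have := abs_nonneg x
                  nlinarith
              _ = (K2 * (H * u₀^(H-1))) * ((1+|x|)^(n+1) * (1+|x|)) := by ring
              _ = (K2 * (H * u₀^(H-1))) * (1+|x|)^(n+2) := by rw [← pow_succ]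
        have hf2 : Integrable (fun x => pFt F (u₀^H*x) u₀) (gaussianReal 0 1) :=
          integrable_of_poly_bound (hcont_x_Ft u₀).aestronglyMeasurable
            (fun x => hbFt u₀ ⟨hu₀0.le, hu₀T.le⟩ x)
        rw [integral_add hf1 hf2]
        have hibp : ∫ x, x * pFx F (u₀^H*x) u₀ ∂(gaussianReal 0 1)
            = ∫ x, u₀^H * pFxx F (u₀^H*x) u₀ ∂(gaussianReal 0 1) := by
          apply gaussian_ibp (C := K2 + T^H * K0) (m := n+1)
          · intro y
            have hinner : HasDerivAt (fun y : ℝ => u₀^H * y) (u₀^H) y := by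
              simpa using (hasDerivAt_id y).const_mul (u₀^H)
            have houter := hasDerivAt_pFx_x hF (u₀^H*y) u₀
            have := HasDerivAt.comp y
              (show HasDerivAt (fun z => pFx F z u₀) (pFxx F (u₀^H*y) u₀) (u₀^H*y) from houter)
              hinner
            exact this.congr_deriv (by ring)
          · exact continuous_const.mul (hcont_x_Fxx u₀)
          · intro y
            calc |pFx F (u₀^H*y) u₀| ≤ K2 * (1+|y|)^(n+1) := hbFx u₀ ⟨hu₀0.le, hu₀T.le⟩ y
              _ ≤ (K2 + T^H * K0) * (1+|y|)^(n+1) := by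
                  apply mul_le_mul_of_nonneg_right _ (by positivity)
                  nlinarith
          · intro y
            rw [abs_mul, abs_of_nonneg (Real.rpow_nonneg hu₀0.le H)]
            have h2 : u₀^H ≤ T^H := Real.rpow_le_rpow hu₀0.le hu₀T.le hH0.le
            calc u₀^H * |pFxx F (u₀^H*y) u₀| ≤ T^H * (K0 * (1+|y|)^n) := by
                  apply mul_le_mul h2 (hbFxx u₀ ⟨hu₀0.le, hu₀T.le⟩ y) (abs_nonneg _) hTH
              _ ≤ (K2 + T^H * K0) * (1+|y|)^(n+1) := by
                  have h3 : (1+|y|)^n ≤ (1+|y|)^(n+1) :=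
                    pow_le_pow_right₀ (by linarith [abs_nonneg y]) (Nat.le_succ n)
                  have h5 := mul_le_mul_of_nonneg_left h3 (mul_nonneg hTH hK0nn)
                  have h6 : 0 ≤ K2 * (1+|y|)^(n+1) := mul_nonneg hK2nn (by positivity)
                  nlinarith [h5, h6]
        have hrw1 : (∫ x, pFx F (u₀^H*x) u₀ * (H * u₀^(H-1) * x) ∂(gaussianReal 0 1))
            = (H * u₀^(H-1)) * ∫ x, x * pFx F (u₀^H*x) u₀ ∂(gaussianReal 0 1) := by
          rw [← integral_const_mul]
          congr 1 with x
          ring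
        rw [hrw1, hibp, integral_const_mul]
        have hpow : H * u₀^(H-1) * (u₀^H * ∫ x, pFxx F (u₀^H*x) u₀ ∂(gaussianReal 0 1))
            = H * u₀^(2*H-1) * (∫ x, pFxx F (u₀^H*x) u₀ ∂(gaussianReal 0 1)) := by
          have : u₀^(H-1) * u₀^H = u₀^(2*H-1) := by
            rw [← Real.rpow_add hu₀0]
            congr 1
            ring
          calc H * u₀^(H-1) * (u₀^H * ∫ x, pFxx F (u₀^H*x) u₀ ∂(gaussianReal 0 1))
              = H * (u₀^(H-1) * u₀^H) * (∫ x, pFxx F (u₀^H*x) u₀ ∂(gaussianReal 0 1)) := by ring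
            _ = _ := by rw [this]
        rw [hpow]
        ring
      rw [hsplit] at hD
      exact hD
    · -- measurability of F' u₀
      exact (((hcont_x_Fx u₀).mul (continuous_const.mul continuous_id)).add
        (hcont_x_Ft u₀)).aestronglyMeasurable
    · -- bound
      filter_upwards with x
      intro v hv
      obtain ⟨hav, hvIcc, hv0⟩ := hball v hv
      have hva : v^(H-1) ≤ a^(H-1) :=
        Real.rpow_le_rpow_of_nonpos ha0 hav (by linarith)
      have hvH1 : 0 ≤ v^(H-1) := Real.rpow_nonneg hv0.le _
      rw [Real.norm_eq_abs]
      calc |pFx F (v^H*x) v * (H * v^(H-1) * x) + pFt F (v^H*x) v|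
          ≤ |pFx F (v^H*x) v * (H * v^(H-1) * x)| + |pFt F (v^H*x) v| := abs_add_le _ _
        _ ≤ (K2 * (1+|x|)^(n+1)) * (H * a^(H-1) * (1+|x|)) + K0 * (1+|x|)^n := by
            apply add_le_add _ (hbFt v hvIcc x)
            rw [abs_mul]
            apply mul_le_mul (hbFx v hvIcc x) _ (abs_nonneg _) (by positivity)
            rw [abs_mul, abs_of_nonneg (by positivity : (0:ℝ) ≤ H * v^(H-1))]
            have hx := abs_nonneg x
            have : H * v^(H-1) ≤ H * a^(H-1) := mul_le_mul_of_nonneg_left hva hH0.le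
            nlinarith
        _ ≤ Kb * (1+|x|)^(n+2) := by
            rw [hKb]
            have h5 : (K2 * (1+|x|)^(n+1)) * (H * a^(H-1) * (1+|x|))
                = (K2 * (H * a^(H-1))) * ((1+|x|)^(n+1) * (1+|x|)) := by ring
            rw [h5, ← pow_succ]
            have h6 : (1+|x|)^n ≤ (1+|x|)^(n+2) :=
              pow_le_pow_right₀ (by linarith [abs_nonneg x]) (by omega)
            have h7 : (0:ℝ) ≤ (1+|x|)^(n+2) := by positivity
            nlinarith [mul_le_mul_of_nonneg_left h6 hK0nn]
    · exact (integrable_poly_gauss (n+2)).const_mul Kb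
    · -- differentiability
      filter_upwards with x
      intro v hv
      obtain ⟨hav, hvIcc, hv0⟩ := hball v hv
      have hc : HasDerivAt (fun v : ℝ => v^H * x) ((H * v^(H-1)) * x) v :=
        (Real.hasDerivAt_rpow_const (Or.inl hv0.ne')).mul_const x
      exact hasDerivAt_comp_curve hF hc
  -- interval integrability of the pieces
  have hA_ii : IntervalIntegrable (fun u => ∫ x, pFt F (u^H*x) u ∂(gaussianReal 0 1))
      volume s t := by
    apply ContinuousOn.intervalIntegrable
    rwa [uIcc_of_le hst]
  obtain ⟨M, hM⟩ : ∃ M, ∀ u ∈ Icc s t,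
      ‖∫ x, pFxx F (u^H*x) u ∂(gaussianReal 0 1)‖ ≤ M :=
    (isCompact_Icc).exists_bound_of_continuousOn hBcont
  have hM0 : 0 ≤ M := le_trans (norm_nonneg _) (hM s ⟨le_refl s, hst⟩)
  have hrpow_ii : IntervalIntegrable (fun u : ℝ => u^(2*H-1)) volume s t :=
    intervalIntegral.intervalIntegrable_rpow' (by linarith)
  have hB2_ii : IntervalIntegrable
      (fun u => (∫ x, pFxx F (u^H*x) u ∂(gaussianReal 0 1)) * (2*H*u^(2*H-1)))
      volume s t := by
    rw [intervalIntegrable_iff_integrableOn_Ioc_of_le hst]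
    have hmono : IntegrableOn (fun u : ℝ => (M * (2*H)) * u^(2*H-1)) (Ioc s t) volume := by
      have := hrpow_ii
      rw [intervalIntegrable_iff_integrableOn_Ioc_of_le hst] at this
      exact this.const_mul _
    apply hmono.mono'
    · apply ContinuousOn.aestronglyMeasurable _ measurableSet_Ioc
      apply ContinuousOn.mul
      · exact hBcont.mono Ioc_subset_Icc_self
      · apply ContinuousOn.mul continuousOn_const
        intro u hu
        exact (Real.continuousAt_rpow_const u (2*H-1)
          (Or.inl (ne_of_gt (lt_of_le_of_lt hs hu.1)))).continuousWithinAt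
    · filter_upwards [ae_restrict_mem measurableSet_Ioc] with u hu
      have hu0 : 0 < u := lt_of_le_of_lt hs hu.1
      have h1 : 0 ≤ u^(2*H-1) := Real.rpow_nonneg hu0.le _
      rw [norm_mul, Real.norm_eq_abs (2*H*u^(2*H-1)),
        abs_of_nonneg (by positivity : (0:ℝ) ≤ 2*H*u^(2*H-1))]
      calc ‖∫ x, pFxx F (u^H*x) u ∂(gaussianReal 0 1)‖ * (2*H*u^(2*H-1))
          ≤ M * (2*H*u^(2*H-1)) := by
            apply mul_le_mul_of_nonneg_right (hM u ⟨hu.1.le, hu.2⟩) (by positivity)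
        _ = (M * (2*H)) * u^(2*H-1) := by ring
  have hhalf_ii : IntervalIntegrable
      (fun u => H * u^(2*H-1) * (∫ x, pFxx F (u^H*x) u ∂(gaussianReal 0 1)))
      volume s t := by
    have heq : (fun u => H * u^(2*H-1) * (∫ x, pFxx F (u^H*x) u ∂(gaussianReal 0 1)))
        = (fun u => (1/2) * ((∫ x, pFxx F (u^H*x) u ∂(gaussianReal 0 1)) * (2*H*u^(2*H-1)))) := by
      funext u; ring
    rw [heq]
    exact hB2_ii.const_mul (1/2)
  have hg'_ii : IntervalIntegrable
      (fun u => (∫ x, pFt F (u^H*x) u ∂(gaussianReal 0 1))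
        + H * u^(2*H-1) * (∫ x, pFxx F (u^H*x) u ∂(gaussianReal 0 1))) volume s t :=
    hA_ii.add hhalf_ii
  -- FTC
  have hftc := intervalIntegral.integral_eq_sub_of_hasDeriv_right_of_le hst hgcont
    (fun u hu => (hgderiv u hu).hasDerivWithinAt) hg'_ii
  rw [← hftc]
  rw [intervalIntegral.integral_add hA_ii hhalf_ii]
  congr 1
  have heq : (fun u => H * u^(2*H-1) * (∫ x, pFxx F (u^H*x) u ∂(gaussianReal 0 1)))
      = (fun u => (1/2) * ((∫ x, pFxx F (u^H*x) u ∂(gaussianReal 0 1)) * (2*H*u^(2*H-1)))) := by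
    funext u; ring
  rw [show (∫ u in s..t, H * u^(2*H-1) * (∫ x, pFxx F (u^H*x) u ∂(gaussianReal 0 1)))
      = ∫ u in s..t, (1/2) * ((∫ x, pFxx F (u^H*x) u ∂(gaussianReal 0 1)) * (2*H*u^(2*H-1))) from by
    rw [heq]]
  rw [intervalIntegral.integral_const_mul]


end
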